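/- arXiv:1805.08382 — 12 statements merged into one kernel-verified Lean document; each statement's English description precedes it below -/
import Mathlib

section
/- Let I(x₁,x₂) = ½a₁x₁² + a₂x₁x₂ + ½a₃x₂² + a₄x₁ + a₅x₂, and set D₁ = a₁a₃ − a₂², D₂ = 2a₂a₄a₅ − a₃a₄² − a₁a₅². Suppose (x₁', x₂') satisfy the discretization x₁' − x₁ = h(B·∂I/∂x₂(x₁',x₂') + C·∂I/∂x₂(x₁,x₂)) and x₂' − x₂ = −h(B·∂I/∂x₁(x₁',x₂') + C·∂I/∂x₁(x₁,x₂)) for real numbers B, C, h. Then (1 + h²D₁B²)·(I(x₁',x₂') − D₂/(2D₁)) = (1 + h²D₁C²)·(I(x₁,x₂) − D₂/(2D₁)), provided D₁ ≠ 0. -/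
/-- Kahan-type discretization of a planar system with quadratic integral
`I(x₁,x₂) = ½a₁x₁² + a₂x₁x₂ + ½a₃x₂² + a₄x₁ + a₅x₂` satisfies the key identity
`(1 + h²D₁B²)(I' − D₂/(2D₁)) = (1 + h²D₁C²)(I − D₂/(2D₁))` when `D₁ ≠ 0`. -/
theorem kahan_two_var_identity
    (a1 a2 a3 a4 a5 h B C x1 x2 x1' x2' : ℝ)
    (hD1 : a1 * a3 - a2 ^ 2 ≠ 0)
    (heq1 : x1' - x1 =
      h * (B * (a2 * x1' + a3 * x2' + a5) + C * (a2 * x1 + a3 * x2 + a5)))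
    (heq2 : x2' - x2 =
      -(h * (B * (a1 * x1' + a2 * x2' + a4) + C * (a1 * x1 + a2 * x2 + a4)))) :
    (1 + h ^ 2 * (a1 * a3 - a2 ^ 2) * B ^ 2) *
        ((a1 / 2 * x1' ^ 2 + a2 * x1' * x2' + a3 / 2 * x2' ^ 2 + a4 * x1' + a5 * x2')
          - (2 * a2 * a4 * a5 - a3 * a4 ^ 2 - a1 * a5 ^ 2) / (2 * (a1 * a3 - a2 ^ 2)))
      = (1 + h ^ 2 * (a1 * a3 - a2 ^ 2) * C ^ 2) *
        ((a1 / 2 * x1 ^ 2 + a2 * x1 * x2 + a3 / 2 * x2 ^ 2 + a4 * x1 + a5 * x2)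
          - (2 * a2 * a4 * a5 - a3 * a4 ^ 2 - a1 * a5 ^ 2) / (2 * (a1 * a3 - a2 ^ 2))) := by
  have key : (1 + h ^ 2 * (a1 * a3 - a2 ^ 2) * B ^ 2) *
      (2 * (a1 * a3 - a2 ^ 2) *
          (a1 / 2 * x1' ^ 2 + a2 * x1' * x2' + a3 / 2 * x2' ^ 2 + a4 * x1' + a5 * x2')
        - (2 * a2 * a4 * a5 - a3 * a4 ^ 2 - a1 * a5 ^ 2))
      = (1 + h ^ 2 * (a1 * a3 - a2 ^ 2) * C ^ 2) *
      (2 * (a1 * a3 - a2 ^ 2) *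
          (a1 / 2 * x1 ^ 2 + a2 * x1 * x2 + a3 / 2 * x2 ^ 2 + a4 * x1 + a5 * x2)
        - (2 * a2 * a4 * a5 - a3 * a4 ^ 2 - a1 * a5 ^ 2)) := by
    linear_combination
      ((a1 * a3 - a2 ^ 2) * ((a1 * x1' + a2 * x2' + a4) + (a1 * x1 + a2 * x2 + a4))
        + h * (a1 * a3 - a2 ^ 2) * C * ((a1 * a3 - a2 ^ 2) * x2 - (a2 * a4 - a1 * a5))
        - h * (a1 * a3 - a2 ^ 2) * B * ((a1 * a3 - a2 ^ 2) * x2' - (a2 * a4 - a1 * a5))) * heq1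
      + ((a1 * a3 - a2 ^ 2) * ((a2 * x1' + a3 * x2' + a5) + (a2 * x1 + a3 * x2 + a5))
        - h * (a1 * a3 - a2 ^ 2) * C * ((a1 * a3 - a2 ^ 2) * x1 - (a2 * a5 - a3 * a4))
        + h * (a1 * a3 - a2 ^ 2) * B * ((a1 * a3 - a2 ^ 2) * x1' - (a2 * a5 - a3 * a4))) * heq2
  field_simp
  linear_combination key
end

section
/- With I, D₁, D₂ as above (no assumption D₁ ≠ 0), if x₁' − x₁ = h(B·I₂' + C·I₂) and x₂' − x₂ = −h(B·I₁' + C·I₁) where Iᵢ', Iᵢ denote the partial derivatives of I at (x₁',x₂') and (x₁,x₂) respectively, then (1 + h²D₁B²)·I(x₁',x₂') − ½h²D₂B² = (1 + h²D₁C²)·I(x₁,x₂) − ½h²D₂C². -/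
/-- The polynomial form of the discretization identity, valid without assuming `D₁ ≠ 0`:
`(1 + h²D₁B²)·I(x₁',x₂') − ½h²D₂B² = (1 + h²D₁C²)·I(x₁,x₂) − ½h²D₂C²`. -/
theorem kahan_two_var_identity_polynomial
    (a1 a2 a3 a4 a5 h B C x1 x2 x1' x2' : ℝ)
    (heq1 : x1' - x1 =
      h * (B * (a2 * x1' + a3 * x2' + a5) + C * (a2 * x1 + a3 * x2 + a5)))
    (heq2 : x2' - x2 =
      -(h * (B * (a1 * x1' + a2 * x2' + a4) + C * (a1 * x1 + a2 * x2 + a4)))) :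
    (1 + h ^ 2 * (a1 * a3 - a2 ^ 2) * B ^ 2) *
        (a1 / 2 * x1' ^ 2 + a2 * x1' * x2' + a3 / 2 * x2' ^ 2 + a4 * x1' + a5 * x2')
      - 1 / 2 * h ^ 2 * (2 * a2 * a4 * a5 - a3 * a4 ^ 2 - a1 * a5 ^ 2) * B ^ 2
      = (1 + h ^ 2 * (a1 * a3 - a2 ^ 2) * C ^ 2) *
          (a1 / 2 * x1 ^ 2 + a2 * x1 * x2 + a3 / 2 * x2 ^ 2 + a4 * x1 + a5 * x2)
        - 1 / 2 * h ^ 2 * (2 * a2 * a4 * a5 - a3 * a4 ^ 2 - a1 * a5 ^ 2) * C ^ 2 := by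
  linear_combination
    (1/2 * ((a1 * x1' + a2 * x2' + a4) + (a1 * x1 + a2 * x2 + a4))
      + h/2 * (B * (a2 * (a1 * x1' + a2 * x2' + a4) - a1 * (a2 * x1' + a3 * x2' + a5))
             - C * (a2 * (a1 * x1  + a2 * x2  + a4) - a1 * (a2 * x1  + a3 * x2  + a5)))) * heq1
    + (1/2 * ((a2 * x1' + a3 * x2' + a5) + (a2 * x1 + a3 * x2 + a5))
      + h/2 * (B * (a3 * (a1 * x1' + a2 * x2' + a4) - a2 * (a2 * x1' + a3 * x2' + a5))
             - C * (a3 * (a1 * x1  + a2 * x2  + a4) - a2 * (a2 * x1  + a3 * x2  + a5)))) * heq2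
end

section
/- Under the discretization x₁' − x₁ = hB(I₂' + I₂), x₂' − x₂ = −hB(I₁' + I₁) (i.e. equal weights B = C, the discrete gradient case), the quadratic I(x₁,x₂) = ½a₁x₁² + a₂x₁x₂ + ½a₃x₂² + a₄x₁ + a₅x₂ is exactly preserved: I(x₁',x₂') = I(x₁,x₂). -/
/-- Discrete gradient case (equal weights `B = C`): the quadratic integral `I`
is exactly preserved. -/
theorem discrete_gradient_preserves_quadratic
    (a1 a2 a3 a4 a5 h B x1 x2 x1' x2' : ℝ)
    (heq1 : x1' - x1 =
      h * B * ((a2 * x1' + a3 * x2' + a5) + (a2 * x1 + a3 * x2 + a5)))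
    (heq2 : x2' - x2 =
      -(h * B * ((a1 * x1' + a2 * x2' + a4) + (a1 * x1 + a2 * x2 + a4)))) :
    a1 / 2 * x1' ^ 2 + a2 * x1' * x2' + a3 / 2 * x2' ^ 2 + a4 * x1' + a5 * x2'
      = a1 / 2 * x1 ^ 2 + a2 * x1 * x2 + a3 / 2 * x2 ^ 2 + a4 * x1 + a5 * x2 := by
  linear_combination ((a1 * x1' + a2 * x2' + a4) + (a1 * x1 + a2 * x2 + a4)) / 2 * heq1 +
    ((a2 * x1' + a3 * x2' + a5) + (a2 * x1 + a3 * x2 + a5)) / 2 * heq2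
end

section
/- Consider the 2D Suslov system x₁' = 2αx₁x₂, x₂' = −2x₁². Its Kahan discretization (u − x₁)/h = α(u x₂ + x₁ v), (v − x₂)/h = −2 x₁ u preserves the modified integral Ĩ(x₁,x₂) = (½x₁² + ½αx₂²)/(1 + h²αx₁²); i.e. if (u,v) satisfies the Kahan equations then Ĩ(u,v) = Ĩ(x₁,x₂) whenever both denominators are nonzero. -/
/-- The Kahan discretization of the 2D Suslov system `ẋ₁ = 2αx₁x₂`, `ẋ₂ = −2x₁²`
preserves the modified integral `Ĩ(x₁,x₂) = (½x₁² + ½αx₂²)/(1 + h²αx₁²)`. -/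
theorem suslov_kahan_modified_integral
    (α h x1 x2 u v : ℝ)
    (heq1 : u - x1 = h * (α * (u * x2 + x1 * v)))
    (heq2 : v - x2 = -(h * (2 * x1 * u)))
    (hden : 1 + h ^ 2 * α * x1 ^ 2 ≠ 0)
    (hden' : 1 + h ^ 2 * α * u ^ 2 ≠ 0) :
    (1 / 2 * u ^ 2 + 1 / 2 * α * v ^ 2) / (1 + h ^ 2 * α * u ^ 2)
      = (1 / 2 * x1 ^ 2 + 1 / 2 * α * x2 ^ 2) / (1 + h ^ 2 * α * x1 ^ 2) := by
  rw [div_eq_div_iff hden' hden]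
  linear_combination (1/2 * (u + x1 + h * α * (u * x2 - x1 * v))) * heq1
    + (1/2 * α * (v + x2)) * heq2
end

section
/- Consider the Zhukovsky–Volterra system ẋ₁ = αx₂x₃ − β₂x₃, ẋ₂ = β₁x₃, ẋ₃ = −αx₁x₂ − β₁x₂ + β₂x₁. Its Kahan discretization exactly preserves the polynomial Ĩ(x₁,x₂,x₃) = ½αx₂² − β₁x₁ − β₂x₂ − ⅛h²αβ₁²x₃²: if (x₁',x₂',x₃') is the Kahan update of (x₁,x₂,x₃) with step h, then Ĩ(x₁',x₂',x₃') = Ĩ(x₁,x₂,x₃). -/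
/-- The Kahan discretization of the Zhukovsky–Volterra system with `β₃ = 0` preserves
the modified integral `Ĩ = ½αx₂² − β₁x₁ − β₂x₂ − ⅛h²αβ₁²x₃²`. -/
theorem zhukovsky_volterra_kahan_modified_integral
    (α β1 β2 h x1 x2 x3 x1' x2' x3' : ℝ)
    (heq1 : (x1' - x1) / h = α * (x2' * x3 + x2 * x3') / 2 - β2 * (x3 + x3') / 2)
    (heq2 : (x2' - x2) / h = β1 * (x3 + x3') / 2)
    (heq3 : (x3' - x3) / h =
      -(α * (x1' * x2 + x1 * x2') / 2) - β1 * (x2 + x2') / 2 + β2 * (x1 + x1') / 2)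
    (hh : h ≠ 0) :
    1 / 2 * α * x2' ^ 2 - β1 * x1' - β2 * x2' - 1 / 8 * h ^ 2 * α * β1 ^ 2 * x3' ^ 2
      = 1 / 2 * α * x2 ^ 2 - β1 * x1 - β2 * x2 - 1 / 8 * h ^ 2 * α * β1 ^ 2 * x3 ^ 2 := by
  have e1 : x1' - x1 = h * (α * (x2' * x3 + x2 * x3') / 2 - β2 * (x3 + x3') / 2) := by
    field_simp at heq1; linarith
  have e2 : x2' - x2 = h * (β1 * (x3 + x3') / 2) := by
    field_simp at heq2; linarith
  linear_combination (-β1) * e1 + (α * (x2' + x2) / 2 - β2 - α * h * β1 * (x3 - x3') / 4) * e2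
end

section
/- The Kahan discretization of the Euler-top-like system ẋ₁ = α₁x₂x₃, ẋ₂ = α₂x₃x₁ (as part of a larger system where x₃' is unconstrained) preserves the modified integral Ĩ₁(x₁,x₂,x₃) = (½α₁x₂² − ½α₂x₁²)/(1 − (h²/4)α₁α₂x₃²): if (x₁'−x₁)/h = α₁(x₂'x₃+x₂x₃')/2 and (x₂'−x₂)/h = α₂(x₃'x₁+x₃x₁')/2, then Ĩ₁(x₁',x₂',x₃') = Ĩ₁(x₁,x₂,x₃), assuming both denominators are nonzero. -/
/-- Euler-top-like subsystem: the two Kahan-discretized equations for `x₁, x₂` alone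
imply preservation of `Ĩ₁ = (½α₁x₂² − ½α₂x₁²)/(1 − (h²/4)α₁α₂x₃²)`. -/
theorem euler_top_kahan_modified_integral
    (α1 α2 h x1 x2 x3 x1' x2' x3' : ℝ)
    (heq1 : x1' - x1 = h * (α1 * (x2' * x3 + x2 * x3') / 2))
    (heq2 : x2' - x2 = h * (α2 * (x3' * x1 + x3 * x1') / 2))
    (hden : 1 - h ^ 2 / 4 * α1 * α2 * x3 ^ 2 ≠ 0)
    (hden' : 1 - h ^ 2 / 4 * α1 * α2 * x3' ^ 2 ≠ 0) :
    (1 / 2 * α1 * x2' ^ 2 - 1 / 2 * α2 * x1' ^ 2) / (1 - h ^ 2 / 4 * α1 * α2 * x3' ^ 2)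
      = (1 / 2 * α1 * x2 ^ 2 - 1 / 2 * α2 * x1 ^ 2) / (1 - h ^ 2 / 4 * α1 * α2 * x3 ^ 2) := by
  have h1 : x1' * (1 - h ^ 2 / 4 * α1 * α2 * x3 ^ 2)
      = x1 + h * α1 / 2 * x2 * x3
        + (h * α1 / 2 * x2 + h ^ 2 / 4 * α1 * α2 * x1 * x3) * x3' := by
    linear_combination heq1 + (h * α1 * x3 / 2) * heq2
  have h2 : x2' * (1 - h ^ 2 / 4 * α1 * α2 * x3 ^ 2)
      = x2 + h * α2 / 2 * x1 * x3
        + (h * α2 / 2 * x1 + h ^ 2 / 4 * α1 * α2 * x2 * x3) * x3' := by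
    linear_combination heq2 + (h * α2 * x3 / 2) * heq1
  rw [div_eq_div_iff hden' hden]
  apply mul_right_cancel₀ hden
  linear_combination
    (1 / 2 * α1 * (x2' * (1 - h ^ 2 / 4 * α1 * α2 * x3 ^ 2)
      + (x2 + h * α2 / 2 * x1 * x3
        + (h * α2 / 2 * x1 + h ^ 2 / 4 * α1 * α2 * x2 * x3) * x3'))) * h2
    - (1 / 2 * α2 * (x1' * (1 - h ^ 2 / 4 * α1 * α2 * x3 ^ 2)
      + (x1 + h * α1 / 2 * x2 * x3
        + (h * α1 / 2 * x2 + h ^ 2 / 4 * α1 * α2 * x1 * x3) * x3'))) * h1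
end

section
/- For the coupled Euler tops ẋ₁ = α₁x₂x₃, ẋ₂ = α₂x₃x₁, ẋ₃ = α₃x₁x₂ + α₄x₄x₅, ẋ₄ = α₅x₅x₃, ẋ₅ = α₆x₃x₄, under the superintegrability condition α₁α₂ = α₅α₆, the Kahan discretization with step h preserves Ĩ₃ = (½(α₁x₂+α₅x₅)² − ½α₁α₂(x₁+x₄)²)/(1 − (h²/4)α₁α₂x₃²), assuming the denominators at both points are nonzero. -/
/-- Coupled Euler tops with superintegrability condition `α₁α₂ = α₅α₆`:
the Kahan discretization preserves
`Ĩ₃ = (½(α₁x₂+α₅x₅)² − ½α₁α₂(x₁+x₄)²)/(1 − (h²/4)α₁α₂x₃²)`. -/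
theorem coupled_euler_tops_kahan_third_integral
    (α1 α2 α5 α6 h x1 x2 x3 x4 x5 x1' x2' x3' x4' x5' : ℝ)
    (hsuper : α1 * α2 = α5 * α6)
    (heq1 : x1' - x1 = h * (α1 * (x2' * x3 + x2 * x3') / 2))
    (heq2 : x2' - x2 = h * (α2 * (x3' * x1 + x3 * x1') / 2))
    (heq4 : x4' - x4 = h * (α5 * (x5' * x3 + x5 * x3') / 2))
    (heq5 : x5' - x5 = h * (α6 * (x3' * x4 + x3 * x4') / 2))
    (hden : 1 - h ^ 2 / 4 * α1 * α2 * x3 ^ 2 ≠ 0)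
    (hden' : 1 - h ^ 2 / 4 * α1 * α2 * x3' ^ 2 ≠ 0) :
    (1 / 2 * (α1 * x2' + α5 * x5') ^ 2 - 1 / 2 * α1 * α2 * (x1' + x4') ^ 2)
        / (1 - h ^ 2 / 4 * α1 * α2 * x3' ^ 2)
      = (1 / 2 * (α1 * x2 + α5 * x5) ^ 2 - 1 / 2 * α1 * α2 * (x1 + x4) ^ 2)
        / (1 - h ^ 2 / 4 * α1 * α2 * x3 ^ 2) := by
  have hQ : (α1 * x2' + α5 * x5') * (1 - α1 * α2 * (h / 2) ^ 2 * x3 ^ 2)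
      = (α1 * x2 + α5 * x5) * (1 + α1 * α2 * (h / 2) ^ 2 * x3 * x3')
        + α1 * α2 * (h / 2) * (x3 + x3') * (x1 + x4) := by
    linear_combination α1 * heq2 + α5 * heq5 - (h / 2 * (x3' * x4 + x3 * x4')) * hsuper
      + (α1 * α2 * (h / 2) * x3) * (heq1 + heq4)
  have hS : (x1' + x4') * (1 - α1 * α2 * (h / 2) ^ 2 * x3 ^ 2)
      = (x1 + x4) * (1 + α1 * α2 * (h / 2) ^ 2 * x3 * x3')
        + (h / 2) * (x3 + x3') * (α1 * x2 + α5 * x5) := by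
    linear_combination heq1 + heq4 + ((h / 2) * x3) * (α1 * heq2 + α5 * heq5
      - (h / 2 * (x3' * x4 + x3 * x4')) * hsuper)
  rw [div_eq_div_iff hden' hden]
  apply mul_left_cancel₀ hden
  linear_combination
    (((α1 * x2' + α5 * x5') * (1 - α1 * α2 * (h / 2) ^ 2 * x3 ^ 2)
        + (α1 * x2 + α5 * x5) * (1 + α1 * α2 * (h / 2) ^ 2 * x3 * x3')
        + α1 * α2 * (h / 2) * (x3 + x3') * (x1 + x4)) / 2) * hQ
    - (α1 * α2 / 2 * ((x1' + x4') * (1 - α1 * α2 * (h / 2) ^ 2 * x3 ^ 2)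
        + (x1 + x4) * (1 + α1 * α2 * (h / 2) ^ 2 * x3 * x3')
        + (h / 2) * (x3 + x3') * (α1 * x2 + α5 * x5))) * hS
end

section
/- If the superintegrability condition α₁α₂ = α₅α₆ holds, then from the Kahan-discretized equations for the coupled Euler tops it follows that X := x₁ + x₄ and Y := α₁x₂ + α₅x₅ satisfy the Kahan-type system (X' − X)/h = (Y'x₃ + Yx₃')/2 and (Y' − Y)/h = α₁α₂(x₃'X + x₃X')/2, where X' = x₁' + x₄', Y' = α₁x₂' + α₅x₅'. -/
/-- Under the superintegrability condition `α₁α₂ = α₅α₆`, the Kahan-discretized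
coupled Euler top equations imply that `X = x₁ + x₄` and `Y = α₁x₂ + α₅x₅` satisfy a
Kahan-type system. -/
theorem coupled_euler_tops_reduced_kahan_system
    (α1 α2 α5 α6 h x1 x2 x3 x4 x5 x1' x2' x3' x4' x5' : ℝ)
    (hsuper : α1 * α2 = α5 * α6)
    (heq1 : (x1' - x1) / h = α1 * (x2' * x3 + x2 * x3') / 2)
    (heq2 : (x2' - x2) / h = α2 * (x3' * x1 + x3 * x1') / 2)
    (heq4 : (x4' - x4) / h = α5 * (x5' * x3 + x5 * x3') / 2)
    (heq5 : (x5' - x5) / h = α6 * (x3' * x4 + x3 * x4') / 2) :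
    ((x1' + x4') - (x1 + x4)) / h
        = ((α1 * x2' + α5 * x5') * x3 + (α1 * x2 + α5 * x5) * x3') / 2
      ∧ ((α1 * x2' + α5 * x5') - (α1 * x2 + α5 * x5)) / h
        = α1 * α2 * (x3' * (x1 + x4) + x3 * (x1' + x4')) / 2 := by
  constructor
  · linear_combination heq1 + heq4
  · linear_combination α1 * heq2 + α5 * heq5 - ((x3' * x4 + x3 * x4') / 2) * hsuper
end

section
/- Let H(x,y) = ½a₁x² + a₂xy + ½a₃y² + a₄x + a₅y and K(y,z) = ½b₁y² + b₂yz + ½b₃z² + b₄y + b₅z, with D₁(a) = a₁a₃ − a₂², D₂(a) = 2a₂a₄a₅ − a₃a₄² − a₁a₅². If (x',y',z') is the Kahan update with step h of the Nambu system ẋ = (∂K/∂z)(∂H/∂y), ẏ = −(∂K/∂z)(∂H/∂x), ż = (∂H/∂x)(∂K/∂y), then H̃(x',y',z') = H̃(x,y,z), where H̃(x,y,z) = (H(x,y) + ⅛h²D₂(a)(b₂y+b₃z+b₅)²)/(1 + ¼h²D₁(a)(b₂y+b₃z+b₅)²), assuming both denominators are nonzero. -/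
/-- The Kahan discretization of the Nambu system `ẋ = K_z H_y`, `ẏ = −K_z H_x`,
`ż = H_x K_y` (all factors affine, so Kahan = symmetrized products) preserves the
modified integral `H̃ = (H + ⅛h²D₂(a)K_z²)/(1 + ¼h²D₁(a)K_z²)`. -/
theorem nambu_kahan_modified_H
    (a1 a2 a3 a4 a5 b1 b2 b3 b4 b5 h x y z x' y' z' : ℝ)
    (heq1 : x' - x = h * ((b2 * y + b3 * z + b5) * (a2 * x' + a3 * y' + a5)
      + (b2 * y' + b3 * z' + b5) * (a2 * x + a3 * y + a5)) / 2)
    (heq2 : y' - y = -(h * ((b2 * y + b3 * z + b5) * (a1 * x' + a2 * y' + a4)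
      + (b2 * y' + b3 * z' + b5) * (a1 * x + a2 * y + a4)) / 2))
    (heq3 : z' - z = h * ((a1 * x + a2 * y + a4) * (b1 * y' + b2 * z' + b4)
      + (a1 * x' + a2 * y' + a4) * (b1 * y + b2 * z + b4)) / 2)
    (hden : 1 + 1 / 4 * h ^ 2 * (a1 * a3 - a2 ^ 2) * (b2 * y + b3 * z + b5) ^ 2 ≠ 0)
    (hden' : 1 + 1 / 4 * h ^ 2 * (a1 * a3 - a2 ^ 2) * (b2 * y' + b3 * z' + b5) ^ 2 ≠ 0) :
    ((1 / 2 * a1 * x' ^ 2 + a2 * x' * y' + 1 / 2 * a3 * y' ^ 2 + a4 * x' + a5 * y')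
        + 1 / 8 * h ^ 2 * (2 * a2 * a4 * a5 - a3 * a4 ^ 2 - a1 * a5 ^ 2)
          * (b2 * y' + b3 * z' + b5) ^ 2)
      / (1 + 1 / 4 * h ^ 2 * (a1 * a3 - a2 ^ 2) * (b2 * y' + b3 * z' + b5) ^ 2)
    = ((1 / 2 * a1 * x ^ 2 + a2 * x * y + 1 / 2 * a3 * y ^ 2 + a4 * x + a5 * y)
        + 1 / 8 * h ^ 2 * (2 * a2 * a4 * a5 - a3 * a4 ^ 2 - a1 * a5 ^ 2)
          * (b2 * y + b3 * z + b5) ^ 2)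
      / (1 + 1 / 4 * h ^ 2 * (a1 * a3 - a2 ^ 2) * (b2 * y + b3 * z + b5) ^ 2) := by
  rw [div_eq_div_iff hden' hden]
  linear_combination
    (((a1*x+a2*y+a4)+(a1*x'+a2*y'+a4))/2
      - h/4*(b2*y'+b3*z'+b5)*(a2*(a1*x+a2*y+a4)-a1*(a2*x+a3*y+a5))
      + h/4*(b2*y+b3*z+b5)*(a2*(a1*x'+a2*y'+a4)-a1*(a2*x'+a3*y'+a5))) * heq1
    + (((a2*x+a3*y+a5)+(a2*x'+a3*y'+a5))/2
      - h/4*(b2*y'+b3*z'+b5)*(a3*(a1*x+a2*y+a4)-a2*(a2*x+a3*y+a5))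
      + h/4*(b2*y+b3*z+b5)*(a3*(a1*x'+a2*y'+a4)-a2*(a2*x'+a3*y'+a5))) * heq2
end

section
/- With H, K as in the Nambu system above and D₁(b) = b₁b₃ − b₂², D₂(b) = 2b₂b₄b₅ − b₃b₄² − b₁b₅², the Kahan discretization with step h also preserves K̃(x,y,z) = (K(y,z) + ⅛h²D₂(b)(a₁x+a₂y+a₄)²)/(1 + ¼h²D₁(b)(a₁x+a₂y+a₄)²): K̃(x',y',z') = K̃(x,y,z), assuming both denominators are nonzero. -/
/-- The Kahan discretization of the Nambu system also preserves the modified integral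
`K̃ = (K + ⅛h²D₂(b)H_x²)/(1 + ¼h²D₁(b)H_x²)`. -/
theorem nambu_kahan_modified_K
    (a1 a2 a3 a4 a5 b1 b2 b3 b4 b5 h x y z x' y' z' : ℝ)
    (heq1 : x' - x = h * ((b2 * y + b3 * z + b5) * (a2 * x' + a3 * y' + a5)
      + (b2 * y' + b3 * z' + b5) * (a2 * x + a3 * y + a5)) / 2)
    (heq2 : y' - y = -(h * ((b2 * y + b3 * z + b5) * (a1 * x' + a2 * y' + a4)
      + (b2 * y' + b3 * z' + b5) * (a1 * x + a2 * y + a4)) / 2))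
    (heq3 : z' - z = h * ((a1 * x + a2 * y + a4) * (b1 * y' + b2 * z' + b4)
      + (a1 * x' + a2 * y' + a4) * (b1 * y + b2 * z + b4)) / 2)
    (hden : 1 + 1 / 4 * h ^ 2 * (b1 * b3 - b2 ^ 2) * (a1 * x + a2 * y + a4) ^ 2 ≠ 0)
    (hden' : 1 + 1 / 4 * h ^ 2 * (b1 * b3 - b2 ^ 2) * (a1 * x' + a2 * y' + a4) ^ 2 ≠ 0) :
    ((1 / 2 * b1 * y' ^ 2 + b2 * y' * z' + 1 / 2 * b3 * z' ^ 2 + b4 * y' + b5 * z')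
        + 1 / 8 * h ^ 2 * (2 * b2 * b4 * b5 - b3 * b4 ^ 2 - b1 * b5 ^ 2)
          * (a1 * x' + a2 * y' + a4) ^ 2)
      / (1 + 1 / 4 * h ^ 2 * (b1 * b3 - b2 ^ 2) * (a1 * x' + a2 * y' + a4) ^ 2)
    = ((1 / 2 * b1 * y ^ 2 + b2 * y * z + 1 / 2 * b3 * z ^ 2 + b4 * y + b5 * z)
        + 1 / 8 * h ^ 2 * (2 * b2 * b4 * b5 - b3 * b4 ^ 2 - b1 * b5 ^ 2)
          * (a1 * x + a2 * y + a4) ^ 2)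
      / (1 + 1 / 4 * h ^ 2 * (b1 * b3 - b2 ^ 2) * (a1 * x + a2 * y + a4) ^ 2) := by
  have hK : (1/2*b1*y'^2 + b2*y'*z' + 1/2*b3*z'^2 + b4*y' + b5*z')
      - (1/2*b1*y^2 + b2*y*z + 1/2*b3*z^2 + b4*y + b5*z)
      = h/4*((a1*x' + a2*y' + a4) - (a1*x + a2*y + a4))*((b2*y' + b3*z' + b5)*(b1*y + b2*z + b4) - (b2*y + b3*z + b5)*(b1*y' + b2*z' + b4)) := by
    linear_combination (1/2*((b1*y + b2*z + b4) + (b1*y' + b2*z' + b4)))*heq2 + (1/2*((b2*y + b3*z + b5) + (b2*y' + b3*z' + b5)))*heq3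
  have hW0 : ((b2*y' + b3*z' + b5)*(b1*y + b2*z + b4) - (b2*y + b3*z + b5)*(b1*y' + b2*z' + b4)) = h/4*((a1*x + a2*y + a4)*(b1*(b2*y' + b3*z' + b5)^2 - 2*b2*(b2*y' + b3*z' + b5)*(b1*y' + b2*z' + b4) + b3*(b1*y' + b2*z' + b4)^2) + (a1*x' + a2*y' + a4)*(b1*(b2*y + b3*z + b5)^2 - 2*b2*(b2*y + b3*z + b5)*(b1*y + b2*z + b4) + b3*(b1*y + b2*z + b4)^2) + ((a1*x + a2*y + a4) + (a1*x' + a2*y' + a4))*(b1*(b2*y + b3*z + b5)*(b2*y' + b3*z' + b5) - b2*((b2*y + b3*z + b5)*(b1*y' + b2*z' + b4) + (b2*y' + b3*z' + b5)*(b1*y + b2*z + b4)) + b3*(b1*y + b2*z + b4)*(b1*y' + b2*z' + b4))) := by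
    linear_combination ((b2*b4 - b1*b5) - (b1*b3 - b2^2)/2*(z + z'))*heq2
      + ((b3*b4 - b2*b5) + (b1*b3 - b2^2)/2*(y + y'))*heq3
  have hF : (b1*(b2*y + b3*z + b5)^2 - 2*b2*(b2*y + b3*z + b5)*(b1*y + b2*z + b4) + b3*(b1*y + b2*z + b4)^2) - (b1*(b2*y + b3*z + b5)*(b2*y' + b3*z' + b5) - b2*((b2*y + b3*z + b5)*(b1*y' + b2*z' + b4) + (b2*y' + b3*z' + b5)*(b1*y + b2*z + b4)) + b3*(b1*y + b2*z + b4)*(b1*y' + b2*z' + b4)) = h*(b1*b3 - b2^2)*(a1*x + a2*y + a4)/2*((b2*y' + b3*z' + b5)*(b1*y + b2*z + b4) - (b2*y + b3*z + b5)*(b1*y' + b2*z' + b4)) := by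
    linear_combination (-((b1*b3 - b2^2)*(b1*y + b2*z + b4)))*heq2 + (-((b1*b3 - b2^2)*(b2*y + b3*z + b5)))*heq3
  have hF' : (b1*(b2*y' + b3*z' + b5)^2 - 2*b2*(b2*y' + b3*z' + b5)*(b1*y' + b2*z' + b4) + b3*(b1*y' + b2*z' + b4)^2) - (b1*(b2*y + b3*z + b5)*(b2*y' + b3*z' + b5) - b2*((b2*y + b3*z + b5)*(b1*y' + b2*z' + b4) + (b2*y' + b3*z' + b5)*(b1*y + b2*z + b4)) + b3*(b1*y + b2*z + b4)*(b1*y' + b2*z' + b4)) = h*(b1*b3 - b2^2)*(a1*x' + a2*y' + a4)/2*((b2*y' + b3*z' + b5)*(b1*y + b2*z + b4) - (b2*y + b3*z + b5)*(b1*y' + b2*z' + b4)) := by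
    linear_combination ((b1*b3 - b2^2)*(b1*y' + b2*z' + b4))*heq2 + ((b1*b3 - b2^2)*(b2*y' + b3*z' + b5))*heq3
  rw [div_eq_div_iff hden' hden]
  linear_combination (1 + h^2/8*(b1*b3 - b2^2)*((a1*x + a2*y + a4)^2 + (a1*x' + a2*y' + a4)^2))*hK
    + ((a1*x' + a2*y' + a4) - (a1*x + a2*y + a4))*(h/4*hW0 - h^2/16*(a1*x + a2*y + a4)*hF - h^2/16*(a1*x' + a2*y' + a4)*hF')
end

section
/- For the Nambu system ẋ = ∇H × ∇K with H(x,y), K(y,z) quadratic as above and D₁(a), D₂(a), D₁(b), D₂(b) nonzero where required, the density g(x,y,z) = (H(x,y) − D₂(a)/(2D₁(a)))⁻¹ · (K(y,z) − D₂(b)/(2D₁(b)))⁻¹ satisfies the continuous measure-preservation (Liouville) equation div(g·f) = 0, where f is the Nambu vector field. -/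
lemma hasDerivAt_quad (c2 c1 c0 t : ℝ) :
    HasDerivAt (fun s => c2 * s ^ 2 + c1 * s + c0) (c2 * (2 * t) + c1) t := by
  have h1 := (hasDerivAt_pow 2 t).const_mul c2
  have h2 := (hasDerivAt_id t).const_mul c1
  have h := (h1.add h2).add_const c0
  refine h.congr_deriv ?_
  push_cast
  ring

lemma deriv_invinv (p2 p1 p0 q2 q1 q0 r2 r1 r0 t : ℝ)
    (hp : p2 * t ^ 2 + p1 * t + p0 ≠ 0) (hq : q2 * t ^ 2 + q1 * t + q0 ≠ 0) :
    deriv (fun s => (p2 * s ^ 2 + p1 * s + p0)⁻¹ * (q2 * s ^ 2 + q1 * s + q0)⁻¹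
        * (r2 * s ^ 2 + r1 * s + r0)) t
    = (-(p2 * (2 * t) + p1) / (p2 * t ^ 2 + p1 * t + p0) ^ 2
          * (q2 * t ^ 2 + q1 * t + q0)⁻¹
        + (p2 * t ^ 2 + p1 * t + p0)⁻¹
          * (-(q2 * (2 * t) + q1) / (q2 * t ^ 2 + q1 * t + q0) ^ 2))
        * (r2 * t ^ 2 + r1 * t + r0)
      + (p2 * t ^ 2 + p1 * t + p0)⁻¹ * (q2 * t ^ 2 + q1 * t + q0)⁻¹
        * (r2 * (2 * t) + r1) := by
  have hP := (hasDerivAt_quad p2 p1 p0 t).inv hp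
  have hQ := (hasDerivAt_quad q2 q1 q0 t).inv hq
  have hR := hasDerivAt_quad r2 r1 r0 t
  exact ((hP.mul hQ).mul hR).deriv


set_option maxHeartbeats 4000000 in
/-- The density `g = (H − D₂(a)/(2D₁(a)))⁻¹ (K − D₂(b)/(2D₁(b)))⁻¹` satisfies the
continuous Liouville equation `div(g·f) = 0` for the Nambu vector field `f = ∇H × ∇K`,
on the set where the two factors are nonzero. -/
theorem nambu_density_liouville
    (a1 a2 a3 a4 a5 b1 b2 b3 b4 b5 x y z : ℝ)
    (hD1a : a1 * a3 - a2 ^ 2 ≠ 0)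
    (hD1b : b1 * b3 - b2 ^ 2 ≠ 0)
    (hH : (1 / 2 * a1 * x ^ 2 + a2 * x * y + 1 / 2 * a3 * y ^ 2 + a4 * x + a5 * y)
      - (2 * a2 * a4 * a5 - a3 * a4 ^ 2 - a1 * a5 ^ 2) / (2 * (a1 * a3 - a2 ^ 2)) ≠ 0)
    (hK : (1 / 2 * b1 * y ^ 2 + b2 * y * z + 1 / 2 * b3 * z ^ 2 + b4 * y + b5 * z)
      - (2 * b2 * b4 * b5 - b3 * b4 ^ 2 - b1 * b5 ^ 2) / (2 * (b1 * b3 - b2 ^ 2)) ≠ 0) :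
    deriv (fun s =>
        (((1 / 2 * a1 * s ^ 2 + a2 * s * y + 1 / 2 * a3 * y ^ 2 + a4 * s + a5 * y)
            - (2 * a2 * a4 * a5 - a3 * a4 ^ 2 - a1 * a5 ^ 2) / (2 * (a1 * a3 - a2 ^ 2)))⁻¹
          * ((1 / 2 * b1 * y ^ 2 + b2 * y * z + 1 / 2 * b3 * z ^ 2 + b4 * y + b5 * z)
            - (2 * b2 * b4 * b5 - b3 * b4 ^ 2 - b1 * b5 ^ 2) / (2 * (b1 * b3 - b2 ^ 2)))⁻¹)
          * ((b2 * y + b3 * z + b5) * (a2 * s + a3 * y + a5))) x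
    + deriv (fun s =>
        (((1 / 2 * a1 * x ^ 2 + a2 * x * s + 1 / 2 * a3 * s ^ 2 + a4 * x + a5 * s)
            - (2 * a2 * a4 * a5 - a3 * a4 ^ 2 - a1 * a5 ^ 2) / (2 * (a1 * a3 - a2 ^ 2)))⁻¹
          * ((1 / 2 * b1 * s ^ 2 + b2 * s * z + 1 / 2 * b3 * z ^ 2 + b4 * s + b5 * z)
            - (2 * b2 * b4 * b5 - b3 * b4 ^ 2 - b1 * b5 ^ 2) / (2 * (b1 * b3 - b2 ^ 2)))⁻¹)
          * (-((b2 * s + b3 * z + b5) * (a1 * x + a2 * s + a4)))) y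
    + deriv (fun s =>
        (((1 / 2 * a1 * x ^ 2 + a2 * x * y + 1 / 2 * a3 * y ^ 2 + a4 * x + a5 * y)
            - (2 * a2 * a4 * a5 - a3 * a4 ^ 2 - a1 * a5 ^ 2) / (2 * (a1 * a3 - a2 ^ 2)))⁻¹
          * ((1 / 2 * b1 * y ^ 2 + b2 * y * s + 1 / 2 * b3 * s ^ 2 + b4 * y + b5 * s)
            - (2 * b2 * b4 * b5 - b3 * b4 ^ 2 - b1 * b5 ^ 2) / (2 * (b1 * b3 - b2 ^ 2)))⁻¹)
          * ((a1 * x + a2 * y + a4) * (b1 * y + b2 * s + b4))) z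
    = 0 := by
  set cA := (2 * a2 * a4 * a5 - a3 * a4 ^ 2 - a1 * a5 ^ 2) / (2 * (a1 * a3 - a2 ^ 2)) with hcA
  set cB := (2 * b2 * b4 * b5 - b3 * b4 ^ 2 - b1 * b5 ^ 2) / (2 * (b1 * b3 - b2 ^ 2)) with hcB
  have hp1 : (1/2*a1) * x ^ 2 + (a2*y + a4) * x + (1/2*a3*y^2 + a5*y - cA) ≠ 0 := by
    intro h; exact hH (by linear_combination h)
  have hq1 : (0:ℝ) * x ^ 2 + 0 * x + ((1/2*b1*y^2 + b2*y*z + 1/2*b3*z^2 + b4*y + b5*z) - cB) ≠ 0 := by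
    intro h; exact hK (by linear_combination h)
  have hp2 : (1/2*a3) * y ^ 2 + (a2*x + a5) * y + (1/2*a1*x^2 + a4*x - cA) ≠ 0 := by
    intro h; exact hH (by linear_combination h)
  have hq2 : (1/2*b1) * y ^ 2 + (b2*z + b4) * y + (1/2*b3*z^2 + b5*z - cB) ≠ 0 := by
    intro h; exact hK (by linear_combination h)
  have hp3 : (0:ℝ) * z ^ 2 + 0 * z + ((1/2*a1*x^2 + a2*x*y + 1/2*a3*y^2 + a4*x + a5*y) - cA) ≠ 0 := by
    intro h; exact hH (by linear_combination h)
  have hq3 : (1/2*b3) * z ^ 2 + (b2*y + b5) * z + (1/2*b1*y^2 + b4*y - cB) ≠ 0 := by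
    intro h; exact hK (by linear_combination h)
  have e1 : (fun s => (((1 / 2 * a1 * s ^ 2 + a2 * s * y + 1 / 2 * a3 * y ^ 2 + a4 * s + a5 * y) - cA)⁻¹
          * ((1 / 2 * b1 * y ^ 2 + b2 * y * z + 1 / 2 * b3 * z ^ 2 + b4 * y + b5 * z) - cB)⁻¹)
          * ((b2 * y + b3 * z + b5) * (a2 * s + a3 * y + a5)))
      = (fun s => ((1/2*a1) * s ^ 2 + (a2*y + a4) * s + (1/2*a3*y^2 + a5*y - cA))⁻¹
          * ((0:ℝ) * s ^ 2 + 0 * s + ((1/2*b1*y^2 + b2*y*z + 1/2*b3*z^2 + b4*y + b5*z) - cB))⁻¹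
          * ((0:ℝ) * s ^ 2 + ((b2*y+b3*z+b5)*a2) * s + (b2*y+b3*z+b5)*(a3*y+a5))) := by
    funext s; ring
  have e2 : (fun s => (((1 / 2 * a1 * x ^ 2 + a2 * x * s + 1 / 2 * a3 * s ^ 2 + a4 * x + a5 * s) - cA)⁻¹
          * ((1 / 2 * b1 * s ^ 2 + b2 * s * z + 1 / 2 * b3 * z ^ 2 + b4 * s + b5 * z) - cB)⁻¹)
          * (-((b2 * s + b3 * z + b5) * (a1 * x + a2 * s + a4))))
      = (fun s => ((1/2*a3) * s ^ 2 + (a2*x + a5) * s + (1/2*a1*x^2 + a4*x - cA))⁻¹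
          * ((1/2*b1) * s ^ 2 + (b2*z + b4) * s + (1/2*b3*z^2 + b5*z - cB))⁻¹
          * ((-(b2*a2)) * s ^ 2 + (-(b2*(a1*x+a4) + a2*(b3*z+b5))) * s + (-((b3*z+b5)*(a1*x+a4))))) := by
    funext s; ring
  have e3 : (fun s => (((1 / 2 * a1 * x ^ 2 + a2 * x * y + 1 / 2 * a3 * y ^ 2 + a4 * x + a5 * y) - cA)⁻¹
          * ((1 / 2 * b1 * y ^ 2 + b2 * y * s + 1 / 2 * b3 * s ^ 2 + b4 * y + b5 * s) - cB)⁻¹)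
          * ((a1 * x + a2 * y + a4) * (b1 * y + b2 * s + b4)))
      = (fun s => ((0:ℝ) * s ^ 2 + 0 * s + ((1/2*a1*x^2 + a2*x*y + 1/2*a3*y^2 + a4*x + a5*y) - cA))⁻¹
          * ((1/2*b3) * s ^ 2 + (b2*y + b5) * s + (1/2*b1*y^2 + b4*y - cB))⁻¹
          * ((0:ℝ) * s ^ 2 + ((a1*x+a2*y+a4)*b2) * s + (a1*x+a2*y+a4)*(b1*y+b4))) := by
    funext s; ring
  rw [e1, e2, e3, deriv_invinv _ _ _ _ _ _ _ _ _ _ hp1 hq1,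
    deriv_invinv _ _ _ _ _ _ _ _ _ _ hp2 hq2, deriv_invinv _ _ _ _ _ _ _ _ _ _ hp3 hq3]
  field_simp
  ring
end

section
/- Let I(x₁,x₂) = ½a₁x₁² + a₂x₁x₂ + ½a₃x₂² + a₄x₁ + a₅x₂ with D₁ = a₁a₃ − a₂², D₂ = 2a₂a₄a₅ − a₃a₄² − a₁a₅². Suppose x₁' − x₁ = h(F(𝐱')I₂' + F(𝐱)I₂) and x₂' − x₂ = −h(F(𝐱')I₁' + F(𝐱)I₁) (Case 2, 'trapezoidal-like'). Then the quantity Î(𝐱) = I(x₁,x₂) + h²F(𝐱)²(D₁I(x₁,x₂) − ½D₂) is preserved: Î(𝐱') = Î(𝐱). -/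
/-- Case 2 ("trapezoidal-like", weights `B = F(𝐱')`, `C = F(𝐱)`): the quantity
`Î(𝐱) = I(x₁,x₂) + h²F(𝐱)²(D₁I(x₁,x₂) − ½D₂)` is preserved. -/
theorem trapezoidal_like_modified_integral
    {n : ℕ} (a1 a2 a3 a4 a5 h : ℝ)
    (F : (Fin n → ℝ) → ℝ) (X X' : Fin n → ℝ) (x1 x2 x1' x2' : ℝ)
    (hx1 : 2 ≤ n) (hc1 : x1 = X ⟨0, by omega⟩) (hc2 : x2 = X ⟨1, by omega⟩)
    (hc1' : x1' = X' ⟨0, by omega⟩) (hc2' : x2' = X' ⟨1, by omega⟩)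
    (heq1 : x1' - x1 = h * (F X' * (a2 * x1' + a3 * x2' + a5)
      + F X * (a2 * x1 + a3 * x2 + a5)))
    (heq2 : x2' - x2 = -(h * (F X' * (a1 * x1' + a2 * x2' + a4)
      + F X * (a1 * x1 + a2 * x2 + a4)))) :
    (1 / 2 * a1 * x1' ^ 2 + a2 * x1' * x2' + 1 / 2 * a3 * x2' ^ 2 + a4 * x1' + a5 * x2')
      + h ^ 2 * (F X') ^ 2 * ((a1 * a3 - a2 ^ 2)
          * (1 / 2 * a1 * x1' ^ 2 + a2 * x1' * x2' + 1 / 2 * a3 * x2' ^ 2 + a4 * x1' + a5 * x2')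
        - 1 / 2 * (2 * a2 * a4 * a5 - a3 * a4 ^ 2 - a1 * a5 ^ 2))
    = (1 / 2 * a1 * x1 ^ 2 + a2 * x1 * x2 + 1 / 2 * a3 * x2 ^ 2 + a4 * x1 + a5 * x2)
      + h ^ 2 * (F X) ^ 2 * ((a1 * a3 - a2 ^ 2)
          * (1 / 2 * a1 * x1 ^ 2 + a2 * x1 * x2 + 1 / 2 * a3 * x2 ^ 2 + a4 * x1 + a5 * x2)
        - 1 / 2 * (2 * a2 * a4 * a5 - a3 * a4 ^ 2 - a1 * a5 ^ 2)) := by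
  set b := F X' with hb
  set c := F X with hc
  -- gradients
  -- I1 = a1*x1+a2*x2+a4, I2 = a2*x1+a3*x2+a5 (and primed versions)
  have hD1 : (a1 * x1' + a2 * x2' + a4) - (a1 * x1 + a2 * x2 + a4)
      = h * (a1 * (b * (a2 * x1' + a3 * x2' + a5) + c * (a2 * x1 + a3 * x2 + a5))
           - a2 * (b * (a1 * x1' + a2 * x2' + a4) + c * (a1 * x1 + a2 * x2 + a4))) := by
    linear_combination a1 * heq1 + a2 * heq2
  have hD2 : (a2 * x1' + a3 * x2' + a5) - (a2 * x1 + a3 * x2 + a5)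
      = h * (a2 * (b * (a2 * x1' + a3 * x2' + a5) + c * (a2 * x1 + a3 * x2 + a5))
           - a3 * (b * (a1 * x1' + a2 * x2' + a4) + c * (a1 * x1 + a2 * x2 + a4))) := by
    linear_combination a2 * heq1 + a3 * heq2
  have hcross : (a1 * x1 + a2 * x2 + a4) * (a2 * x1' + a3 * x2' + a5)
      - (a1 * x1' + a2 * x2' + a4) * (a2 * x1 + a3 * x2 + a5)
      = h * (((a1 * x1 + a2 * x2 + a4) + (a1 * x1' + a2 * x2' + a4)) / 2
              * (a2 * (b * (a2 * x1' + a3 * x2' + a5) + c * (a2 * x1 + a3 * x2 + a5))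
               - a3 * (b * (a1 * x1' + a2 * x2' + a4) + c * (a1 * x1 + a2 * x2 + a4)))
           - ((a2 * x1 + a3 * x2 + a5) + (a2 * x1' + a3 * x2' + a5)) / 2
              * (a1 * (b * (a2 * x1' + a3 * x2' + a5) + c * (a2 * x1 + a3 * x2 + a5))
               - a2 * (b * (a1 * x1' + a2 * x2' + a4) + c * (a1 * x1 + a2 * x2 + a4)))) := by
    linear_combination (((a1 * x1 + a2 * x2 + a4) + (a1 * x1' + a2 * x2' + a4)) / 2) * hD2
      - (((a2 * x1 + a3 * x2 + a5) + (a2 * x1' + a3 * x2' + a5)) / 2) * hD1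
  have hdiff : (1 / 2 * a1 * x1' ^ 2 + a2 * x1' * x2' + 1 / 2 * a3 * x2' ^ 2 + a4 * x1' + a5 * x2')
      - (1 / 2 * a1 * x1 ^ 2 + a2 * x1 * x2 + 1 / 2 * a3 * x2 ^ 2 + a4 * x1 + a5 * x2)
      = h * (((a1 * x1 + a2 * x2 + a4) + (a1 * x1' + a2 * x2' + a4)) / 2
              * (b * (a2 * x1' + a3 * x2' + a5) + c * (a2 * x1 + a3 * x2 + a5))
           - ((a2 * x1 + a3 * x2 + a5) + (a2 * x1' + a3 * x2' + a5)) / 2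
              * (b * (a1 * x1' + a2 * x2' + a4) + c * (a1 * x1 + a2 * x2 + a4))) := by
    linear_combination (((a1 * x1 + a2 * x2 + a4) + (a1 * x1' + a2 * x2' + a4)) / 2) * heq1
      + (((a2 * x1 + a3 * x2 + a5) + (a2 * x1' + a3 * x2' + a5)) / 2) * heq2
  linear_combination hdiff + (h / 2) * (b - c) * hcross
    + (h ^ 2 * (b + c) / 4)
        * ((a3 * (b * (a1 * x1' + a2 * x2' + a4) + c * (a1 * x1 + a2 * x2 + a4))
            - a2 * (b * (a2 * x1' + a3 * x2' + a5) + c * (a2 * x1 + a3 * x2 + a5))) * hD1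
         + (a1 * (b * (a2 * x1' + a3 * x2' + a5) + c * (a2 * x1 + a3 * x2 + a5))
            - a2 * (b * (a1 * x1' + a2 * x2' + a4) + c * (a1 * x1 + a2 * x2 + a4))) * hD2)
end
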